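/- Let H be a Hilbert space and A: H → H a bounded self-adjoint invertible operator. For u ∈ H ∖ {0}, consider the Cauchy problem ψ'(s) = -Aψ(s)/‖Aψ(s)‖, ψ(0) = u. Then the solution exists for all |s| < ‖u‖ and satisfies ‖ψ(s) - u‖ ≤ |s| and ‖ψ(s)‖ ≥ ‖u‖ - |s|. -/

import Mathlib

open RealInnerProductSpace

/-- Gronwall-type decay: if `τ' = g ≥ C (R - τ)` on `[0,∞)` and `τ 0 = 0`,
then `R - τ t ≤ R exp(-C t)` for `t ≥ 0`. -/
lemma aux_decay {C R : ℝ} (hC : 0 < C) {g τ : ℝ → ℝ}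
    (hτ : ∀ t, HasDerivAt τ (g t) t) (hτ0 : τ 0 = 0)
    (hlow : ∀ t, 0 ≤ t → C * (R - τ t) ≤ g t) :
    ∀ t, 0 ≤ t → R - τ t ≤ R * Real.exp (-(C * t)) := by
  intro t ht
  set h : ℝ → ℝ := fun x => (R - τ x) * Real.exp (C * x) with hh
  have hd : ∀ x : ℝ, HasDerivAt h
      (-g x * Real.exp (C * x) + (R - τ x) * (Real.exp (C * x) * C)) x := by
    intro x
    have h1 : HasDerivAt (fun x : ℝ => C * x) C x := by
      simpa using (hasDerivAt_id x).const_mul C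
    exact ((hτ x).const_sub R).mul h1.exp
  have hanti : AntitoneOn h (Set.Ici (0 : ℝ)) := by
    apply antitoneOn_of_deriv_nonpos (convex_Ici 0)
    · exact fun x _ => (hd x).continuousAt.continuousWithinAt
    · exact fun x _ => (hd x).differentiableAt.differentiableWithinAt
    · intro x hx
      rw [interior_Ici] at hx
      rw [(hd x).deriv]
      have hle := hlow x hx.le
      have hexp : (0 : ℝ) < Real.exp (C * x) := Real.exp_pos _
      nlinarith
  have hth : h t ≤ R := by
    have := hanti (Set.self_mem_Ici) ht ht
    simpa [hh, hτ0] using this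
  have hexp : (0 : ℝ) < Real.exp (C * t) := Real.exp_pos _
  rw [Real.exp_neg, ← div_eq_mul_inv, le_div_iff₀ hexp]
  exact hth

/-- For a bounded self-adjoint invertible operator `A` on a Hilbert space and
`u ≠ 0`, the Cauchy problem `ψ' = -Aψ/‖Aψ‖`, `ψ(0) = u`, has a solution defined
for all `|s| < ‖u‖`, which satisfies `‖ψ(s) - u‖ ≤ |s|` and `‖ψ(s)‖ ≥ ‖u‖ - |s|`. -/
theorem normalized_gradient_flow_exists {H : Type*}
    [NormedAddCommGroup H] [InnerProductSpace ℝ H] [CompleteSpace H]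
    (A : H →L[ℝ] H) (hsa : ∀ u v : H, ⟪A u, v⟫ = ⟪u, A v⟫)
    (C : ℝ) (hC : 0 < C) (hinv : ∀ ψ : H, C * ‖ψ‖ ≤ ‖A ψ‖)
    (u : H) (hu : u ≠ 0) :
    ∃ ψ : ℝ → H, ψ 0 = u ∧ ∀ s : ℝ, |s| < ‖u‖ →
      HasDerivAt ψ (-(‖A (ψ s)‖⁻¹ • A (ψ s))) s ∧
      ‖ψ s - u‖ ≤ |s| ∧ ‖u‖ - |s| ≤ ‖ψ s‖ := by
  classical
  set B : H →L[ℝ] H := -A with hB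
  -- the linear flow
  set φ : ℝ → H := fun t => NormedSpace.exp (t • B) u with hφ
  have hφd : ∀ t, HasDerivAt φ (B (φ t)) t := by
    intro t
    have h1 : HasDerivAt (fun s : ℝ => NormedSpace.exp (s • B))
        (B * NormedSpace.exp (t • B)) t := hasDerivAt_exp_smul_const' B t
    have h2 := h1.clm_apply (hasDerivAt_const t u)
    simpa [ContinuousLinearMap.mul_apply] using h2
  have hφc : Continuous φ :=
    continuous_iff_continuousAt.mpr fun t => (hφd t).continuousAt
  have hφ0 : φ 0 = u := by simp [hφ, NormedSpace.exp_zero]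
  have hφne : ∀ t, φ t ≠ 0 := by
    intro t h0
    obtain ⟨v, hv⟩ := NormedSpace.isUnit_exp_of_mem_ball (𝕂 := ℝ) (x := t • B)
      ((NormedSpace.expSeries_radius_eq_top ℝ (H →L[ℝ] H)).symm ▸ edist_lt_top _ _)
    apply hu
    have : ((v⁻¹ : (H →L[ℝ] H)ˣ) : H →L[ℝ] H) ((v : H →L[ℝ] H) u) = u := by
      rw [← ContinuousLinearMap.mul_apply, Units.inv_mul, ContinuousLinearMap.one_apply]
    rw [← this, hv]
    rw [hφ] at h0
    simp [h0]
  set g : ℝ → ℝ := fun t => ‖A (φ t)‖ with hg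
  have hgB : ∀ x : H, ‖B x‖ = ‖A x‖ := by intro x; simp [hB]
  have hgpos : ∀ t, 0 < g t := fun t =>
    lt_of_lt_of_le (mul_pos hC (norm_pos_iff.mpr (hφne t))) (hinv (φ t))
  have hgc : Continuous g := (A.continuous.comp hφc).norm
  set τ : ℝ → ℝ := fun t => ∫ r in (0:ℝ)..t, g r with hτdef
  have hτd : ∀ t, HasDerivAt τ (g t) t := fun t =>
    (hgc.integral_hasStrictDerivAt 0 t).hasDerivAt
  have hτ0 : τ 0 = 0 := intervalIntegral.integral_same
  have hτmono : StrictMono τ := by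
    apply strictMono_of_deriv_pos
    intro x
    rw [(hτd x).deriv]
    exact hgpos x
  -- deviation bound
  have hφu : ∀ t, ‖φ t - u‖ ≤ |τ t| := by
    intro t
    have hInt : IntervalIntegrable (fun r => B (φ r)) MeasureTheory.volume 0 t :=
      ((B.continuous.comp hφc)).intervalIntegrable 0 t
    have hFTC : ∫ r in (0:ℝ)..t, B (φ r) = φ t - φ 0 :=
      intervalIntegral.integral_eq_sub_of_hasDerivAt (fun x _ => hφd x) hInt
    rw [hφ0] at hFTC
    rw [← hFTC]
    have := intervalIntegral.norm_integral_le_abs_integral_norm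
      (f := fun r => B (φ r)) (a := (0:ℝ)) (b := t) (μ := MeasureTheory.volume)
    simpa [hgB, ← hτdef] using this
  have hτnonneg : ∀ t, 0 ≤ t → 0 ≤ τ t := by
    intro t ht
    rcases eq_or_lt_of_le ht with h | h
    · simp [← h, hτ0]
    · exact le_of_lt (hτ0 ▸ hτmono h)
  have hτnonpos : ∀ t, t ≤ 0 → τ t ≤ 0 := by
    intro t ht
    rcases eq_or_lt_of_le ht with h | h
    · simp [h, hτ0]
    · exact le_of_lt (hτ0 ▸ hτmono h)
  have hφlow : ∀ t, ‖u‖ - |τ t| ≤ ‖φ t‖ := by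
    intro t
    have h1 : ‖u‖ - ‖φ t‖ ≤ ‖φ t - u‖ := by
      have := norm_sub_norm_le u (φ t)
      rw [norm_sub_rev] at this
      linarith [this]
    linarith [hφu t]
  -- decay bound, forward time
  have hdecF : ∀ t, 0 ≤ t → ‖u‖ - τ t ≤ ‖u‖ * Real.exp (-(C * t)) := by
    apply aux_decay hC hτd hτ0
    intro t ht
    rcases le_or_gt (‖u‖ - τ t) 0 with h | h
    · exact le_trans (mul_nonpos_of_nonneg_of_nonpos hC.le h) (hgpos t).le
    · have habs : |τ t| = τ t := abs_of_nonneg (hτnonneg t ht)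
      have h2 : ‖u‖ - τ t ≤ ‖φ t‖ := by rw [← habs]; exact hφlow t
      calc C * (‖u‖ - τ t) ≤ C * ‖φ t‖ := by nlinarith
        _ ≤ g t := hinv (φ t)
  -- decay bound, backward time
  have hdecB : ∀ t, 0 ≤ t → ‖u‖ + τ (-t) ≤ ‖u‖ * Real.exp (-(C * t)) := by
    have key : ∀ t, 0 ≤ t → ‖u‖ - (fun x => -τ (-x)) t ≤ ‖u‖ * Real.exp (-(C * t)) := by
      apply aux_decay hC (g := fun x => g (-x))
      · intro t
        have h1 : HasDerivAt (fun x : ℝ => τ (-x)) (g (-t) * (-1)) t :=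
          (hτd (-t)).comp t (by exact hasDerivAt_neg t)
        have h2 := h1.neg
        simp only [neg_mul, mul_neg, mul_one, neg_neg] at h2
        exact h2
      · simp [hτ0]
      · intro t ht
        rcases le_or_gt (‖u‖ - -τ (-t)) 0 with h | h
        · exact le_trans (mul_nonpos_of_nonneg_of_nonpos hC.le h) (hgpos (-t)).le
        · have habs : |τ (-t)| = -τ (-t) := abs_of_nonpos (hτnonpos (-t) (by linarith))
          have h2 : ‖u‖ - -τ (-t) ≤ ‖φ (-t)‖ := by rw [← habs]; exact hφlow (-t)
          calc C * (‖u‖ - -τ (-t)) ≤ C * ‖φ (-t)‖ := by nlinarith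
            _ ≤ g (-t) := hinv (φ (-t))
    intro t ht
    have := key t ht
    simpa [sub_neg_eq_add] using this
  -- surjectivity onto (-‖u‖, ‖u‖)
  have hsurj : ∀ s : ℝ, |s| < ‖u‖ → ∃ t, τ t = s := by
    intro s hs
    rw [abs_lt] at hs
    have hRpos : (0:ℝ) < ‖u‖ := norm_pos_iff.mpr hu
    have htend : Filter.Tendsto (fun t : ℝ => ‖u‖ * Real.exp (-(C * t)))
        Filter.atTop (nhds 0) := by
      have : Filter.Tendsto (fun t : ℝ => -(C * t)) Filter.atTop Filter.atBot := by
        apply Filter.tendsto_neg_atBot_iff.mpr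
        exact (Filter.tendsto_atTop_atTop_of_monotone
          (fun a b hab => by nlinarith)
          (fun b => ⟨b / C, by rw [mul_comm, div_mul_cancel₀ _ hC.ne']⟩))
      simpa using (Real.tendsto_exp_atBot.comp this).const_mul ‖u‖
    -- upper
    obtain ⟨T₁, hT₁pos, hT₁⟩ : ∃ T, 0 ≤ T ∧ ‖u‖ * Real.exp (-(C * T)) < ‖u‖ - s := by
      have h1 := (htend.eventually_lt_const (by linarith : (0:ℝ) < ‖u‖ - s)).and
        (Filter.eventually_ge_atTop (0:ℝ))
      obtain ⟨T, hT⟩ := h1.exists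
      exact ⟨T, hT.2, hT.1⟩
    obtain ⟨T₂, hT₂pos, hT₂⟩ : ∃ T, 0 ≤ T ∧ ‖u‖ * Real.exp (-(C * T)) < ‖u‖ + s := by
      have h1 := (htend.eventually_lt_const (by linarith : (0:ℝ) < ‖u‖ + s)).and
        (Filter.eventually_ge_atTop (0:ℝ))
      obtain ⟨T, hT⟩ := h1.exists
      exact ⟨T, hT.2, hT.1⟩
    have hup : s < τ T₁ := by have := hdecF T₁ hT₁pos; linarith
    have hdown : τ (-T₂) < s := by have := hdecB T₂ hT₂pos; linarith
    have hle : -T₂ ≤ T₁ := by linarith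
    have := intermediate_value_Icc hle
      (Continuous.continuousOn (continuous_iff_continuousAt.mpr fun x => (hτd x).continuousAt))
    obtain ⟨t, _, ht⟩ := this ⟨hdown.le, hup.le⟩
    exact ⟨t, ht⟩
  set σ : ℝ → ℝ := Function.invFun τ with hσdef
  have hστ : ∀ t, σ (τ t) = t := Function.leftInverse_invFun hτmono.injective
  have hτσ : ∀ s, |s| < ‖u‖ → τ (σ s) = s := fun s hs =>
    Function.invFun_eq (hsurj s hs)
  refine ⟨φ ∘ σ, ?_, ?_⟩
  · show φ (σ 0) = u
    rw [← hτ0, hστ, hφ0]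
  intro s₀ hs₀
  set t₀ := σ s₀ with ht₀
  have hτt₀ : τ t₀ = s₀ := hτσ s₀ hs₀
  have hτc : Continuous τ := continuous_iff_continuousAt.mpr fun x => (hτd x).continuousAt
  -- continuity of σ at s₀
  have hσc : ContinuousAt σ s₀ := by
    rw [Metric.continuousAt_iff]
    intro ε hε
    refine ⟨min (s₀ - τ (t₀ - ε)) (τ (t₀ + ε) - s₀), ?_, ?_⟩
    · apply lt_min
      · have : τ (t₀ - ε) < τ t₀ := hτmono (by linarith)
        linarith [hτt₀ ▸ this]
      · have : τ t₀ < τ (t₀ + ε) := hτmono (by linarith)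
        linarith [hτt₀ ▸ this]
    · intro s hsd
      rw [Real.dist_eq] at hsd
      have h1 : τ (t₀ - ε) < s := by
        have := abs_lt.mp hsd
        have := min_le_left (s₀ - τ (t₀ - ε)) (τ (t₀ + ε) - s₀)
        linarith
      have h2 : s < τ (t₀ + ε) := by
        have := abs_lt.mp hsd
        have := min_le_right (s₀ - τ (t₀ - ε)) (τ (t₀ + ε) - s₀)
        linarith
      obtain ⟨t, htmem, hteq⟩ := intermediate_value_Ioo (by linarith : t₀ - ε ≤ t₀ + ε)
        hτc.continuousOn ⟨h1, h2⟩
      have hst : σ s = t := by rw [← hteq, hστ]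
      rw [Real.dist_eq, hst]
      rcases htmem with ⟨hm1, hm2⟩
      rw [abs_lt]
      constructor <;> [linarith; linarith]
  -- derivative of σ
  have hev : ∀ᶠ y in nhds s₀, τ (σ y) = y := by
    have hmem : Set.Ioo (-‖u‖) ‖u‖ ∈ nhds s₀ := Ioo_mem_nhds (abs_lt.mp hs₀).1 (abs_lt.mp hs₀).2
    filter_upwards [hmem] with y hy
    exact hτσ y (abs_lt.mpr ⟨hy.1, hy.2⟩)
  have hσd : HasDerivAt σ (g t₀)⁻¹ s₀ :=
    HasDerivAt.of_local_left_inverse hσc (hτd t₀) (ne_of_gt (hgpos t₀)) hev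
  have hψd : HasDerivAt (φ ∘ σ) ((g t₀)⁻¹ • B (φ t₀)) s₀ :=
    (hφd t₀).scomp s₀ hσd
  have hψval : (φ ∘ σ) s₀ = φ t₀ := rfl
  refine ⟨?_, ?_, ?_⟩
  · convert hψd using 1
    rw [hψval, hg, hB]
    simp [smul_neg]
  · rw [hψval]
    calc ‖φ t₀ - u‖ ≤ |τ t₀| := hφu t₀
      _ = |s₀| := by rw [hτt₀]
  · rw [hψval]
    have := hφlow t₀
    rw [hτt₀] at this
    exact this
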